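/- Let X be a Hilbert C*-module over a C*-algebra A, let x, y, e ∈ X with ⟨e,e⟩ an idempotent in A, and let α, β, λ, μ be complex numbers such that ‖x − ((α+β)/2)e‖ ≤ (1/2)|α−β| and ‖y − ((λ+μ)/2)e‖ ≤ (1/2)|λ−μ|. Then ‖⟨x,y⟩ − ⟨x,e⟩⟨e,y⟩‖ ≤ (1/4)|α−β||λ−μ|. -/

import Mathlib

open ComplexConjugate in
lemma gruss_star_algebraMap {A : Type*} [NormedRing A] [StarRing A] [CStarRing A]
    [PartialOrder A] [StarOrderedRing A] [NormedAlgebra ℂ A] (c : ℂ) :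
    star (algebraMap ℂ A c) = algebraMap ℂ A (conj c) := by
  have hreal : ∀ r : ℝ, star (algebraMap ℂ A (r : ℂ)) = algebraMap ℂ A (r : ℂ) := by
    intro r
    set f : ℝ →+ A := AddMonoidHom.mk' (fun r => star (algebraMap ℂ A (r : ℂ))) (by
      intro a b
      rw [Complex.ofReal_add, map_add, star_add]) with hf
    have hcont : Continuous f :=
      show Continuous fun r : ℝ => star (algebraMap ℂ A (r : ℂ)) from
        continuous_star.comp ((continuous_algebraMap ℂ A).comp Complex.continuous_ofReal)
    have h1 := map_real_smul f hcont r (1 : ℝ)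
    simp only [smul_eq_mul, mul_one] at h1
    have h2 : star (algebraMap ℂ A (r : ℂ)) = r • star (algebraMap ℂ A ((1:ℝ) : ℂ)) := h1
    rw [h2, Complex.ofReal_one, map_one, star_one, Algebra.algebraMap_eq_smul_one,
      ← Complex.coe_smul]
  have hI : star (algebraMap ℂ A Complex.I) = - algebraMap ℂ A Complex.I := by
    set v : A := algebraMap ℂ A Complex.I with hv
    have hv2 : v * v = -1 := by
      rw [hv, ← map_mul, Complex.I_mul_I, map_neg, map_one]
    have hvc : ∀ a : A, v * a = a * v := fun a => (Algebra.commutes Complex.I a)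
    set w : A := star v with hw
    have hw2 : w * w = -1 := by
      rw [hw, ← star_mul, hv2, star_neg, star_one]
    have hwv : w * v = v * w := (hvc w).symm
    have hk : star (v * w) = v * w := by
      rw [star_mul, hw, star_star]
    have hkk : (v * w) * (v * w) = 1 := by
      calc (v * w) * (v * w) = v * (w * v * w) := by rw [mul_assoc, mul_assoc]
        _ = v * (v * w * w) := by rw [hwv]
        _ = v * v * (w * w) := by rw [← mul_assoc, ← mul_assoc, mul_assoc (v*v)]
        _ = 1 := by rw [hv2, hw2, neg_mul_neg, one_mul]
    set k : A := v * w with hkdef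
    set f2 : A := 1 - k with hfdef
    have hfsa : star f2 = f2 := by rw [hfdef, star_sub, star_one, hk]
    have hff : f2 * f2 = f2 + f2 := by
      rw [hfdef, sub_mul, mul_sub, mul_sub, mul_one, one_mul, mul_one, hkk]
      abel
    set m : A := v + w with hm
    have hmsa : star m = m := by rw [hm, star_add, hw, star_star, add_comm]
    have hmm : m * m = -(f2 + f2) := by
      rw [hm, hfdef, add_mul, mul_add, mul_add, hv2, hw2, hwv, hkdef]
      abel
    have h1 : (0:A) ≤ f2 + f2 := by
      rw [← hff]
      nth_rewrite 1 [← hfsa]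
      exact star_mul_self_nonneg f2
    have h2 : f2 + f2 ≤ 0 := by
      have h3 : (0:A) ≤ -(f2+f2) := by
        rw [← hmm]
        nth_rewrite 1 [← hmsa]
        exact star_mul_self_nonneg m
      exact neg_nonneg.mp h3
    have hz : f2 + f2 = 0 := le_antisymm h2 h1
    have hf20 : f2 = 0 := by
      have h4 : (2:ℂ) • f2 = 0 := by rw [two_smul]; exact hz
      rcases smul_eq_zero.mp h4 with h | h
      · norm_num at h
      · exact h
    have hvw : k = 1 := by
      rw [hfdef] at hf20
      exact (sub_eq_zero.mp hf20).symm
    have h5 : v * k = v := by rw [hvw, mul_one]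
    rw [hkdef, ← mul_assoc, hv2, neg_one_mul] at h5
    have h6 : -w = v := h5
    exact neg_eq_iff_eq_neg.mp h6
  rw [← Complex.re_add_im c]
  rw [map_add, map_mul, star_add, star_mul, hreal, hI, hreal,
    ← map_neg, ← map_mul, ← map_add]
  congr 1
  simp only [map_add, map_mul, Complex.conj_I, Complex.conj_ofReal]
  ring

/-- Grüss type inequality in a Hilbert C*-module (Theorem 2 of the paper):
if ⟨e,e⟩ is an idempotent and x, y satisfy the two displayed conditions, then
‖⟨x,y⟩ − ⟨x,e⟩⟨e,y⟩‖ ≤ (1/4)|α−β||λ−μ|. -/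
theorem stmt_2 {A : Type*} [NormedRing A] [StarRing A] [CStarRing A] [PartialOrder A]
    [StarOrderedRing A] [NormedAlgebra ℂ A] [CompleteSpace A]
    {X : Type*} [NormedAddCommGroup X] [NormedSpace ℂ X] [CompleteSpace X]
    (smul : X → A → X)
    (ip : X → X → A)
    (h_add : ∀ x y z : X, ip x (y + z) = ip x y + ip x z)
    (h_smul : ∀ (x y : X) (a : A), ip x (smul y a) = ip x y * a)
    (h_csmul : ∀ (c : ℂ) (x y : X), ip x (c • y) = c • ip x y)
    (h_star : ∀ x y : X, star (ip x y) = ip y x)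
    (h_pos : ∀ x : X, 0 ≤ ip x x)
    (h_def : ∀ x : X, ip x x = 0 → x = 0)
    (h_norm : ∀ x : X, ‖x‖ = Real.sqrt ‖ip x x‖)
    (x y e : X) (h_idem : ip e e * ip e e = ip e e)
    (α β lam μ : ℂ)
    (hx : ‖x - ((α + β) / 2) • e‖ ≤ (1 / 2) * ‖α - β‖)
    (hy : ‖y - ((lam + μ) / 2) • e‖ ≤ (1 / 2) * ‖lam - μ‖) :
    ‖ip x y - ip x e * ip e y‖ ≤ (1 / 4) * ‖α - β‖ * ‖lam - μ‖ := by
  -- A is a C*-algebra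
  letI : StarModule ℂ A := ⟨fun c a => by
    rw [Algebra.smul_def, star_mul, gruss_star_algebraMap, ← Algebra.commutes,
      ← Algebra.smul_def]
    rfl⟩
  letI : CStarAlgebra A :=
    { ‹NormedRing A›, ‹StarRing A›, ‹CStarRing A›, ‹NormedAlgebra ℂ A›,
      ‹CompleteSpace A›, (inferInstance : StarModule ℂ A) with }
  -- X is a CStarModule over A
  letI : SMul Aᵐᵒᵖ X := ⟨fun a z => smul z a.unop⟩
  letI : Inner Aᵐᵒᵖ X := ⟨fun a b => MulOpposite.op (ip a b)⟩
  have hzero : ∀ z : X, ip z 0 = 0 := fun z => by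
    have := h_add z 0 0
    rw [add_zero] at this
    exact left_eq_add.mp this
  letI : CStarModule Aᵐᵒᵖ X :=
    { inner_add_right := fun {a b c} => congrArg MulOpposite.op (h_add a b c)
      inner_self_nonneg := fun {a} => h_pos a
      inner_self := fun {a} => ⟨fun h => h_def a (congrArg MulOpposite.unop h),
        fun h => by rw [h]; exact congrArg MulOpposite.op (hzero 0)⟩
      inner_op_smul_right := fun {a b c} => congrArg MulOpposite.op (h_smul b c a.unop)
      inner_smul_right_complex := fun {z a b} => congrArg MulOpposite.op (h_csmul z a b)
      star_inner := fun a b => congrArg MulOpposite.op (h_star a b)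
      norm_eq_sqrt_norm_inner_self := h_norm }
  -- basic facts
  have ip_sub_right : ∀ a b c : X, ip a (b - c) = ip a b - ip a c :=
    fun a b c => congrArg MulOpposite.unop
      (CStarModule.inner_sub_right (A := Aᵐᵒᵖ) (E := X) (x := a) (y := b) (z := c))
  have ip_add_left : ∀ a b c : X, ip (a + b) c = ip a c + ip b c :=
    fun a b c => congrArg MulOpposite.unop
      (CStarModule.inner_add_left (A := Aᵐᵒᵖ) (E := X) (x := a) (y := b) (z := c))
  have h_sp : star (ip e e) = ip e e := h_star e e
  -- smul e (ip e e) = e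
  have h1 : smul e (ip e e) = e := by
    have he1 : ip e (smul e (ip e e) - e) = 0 := by
      rw [ip_sub_right, h_smul, h_idem, sub_self]
    have he2 : ip (smul e (ip e e) - e) e = 0 := by
      rw [← h_star, he1, star_zero]
    have hd : ip (smul e (ip e e) - e) (smul e (ip e e) - e) = 0 := by
      rw [ip_sub_right, h_smul, he2, zero_mul, sub_zero]
    exact sub_eq_zero.mp (h_def _ hd)
  have h2 : ∀ z, ip e e * ip e z = ip e z := by
    intro z
    have h3 : ip (smul e (ip e e)) z = ip e e * ip e z := by
      rw [← h_star z (smul e (ip e e)), h_smul, star_mul, h_sp, h_star z e]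
    rw [h1] at h3
    exact h3.symm
  have hPe : ∀ z, ip e (z - smul e (ip e z)) = 0 := fun z => by
    rw [ip_sub_right, h_smul, h2, sub_self]
  have hPe' : ∀ z, ip (z - smul e (ip e z)) e = 0 := fun z => by
    rw [← h_star, hPe, star_zero]
  have hPc : ∀ (z : X) (c : ℂ), ip (z - smul e (ip e z)) (c • e) = 0 := fun z c => by
    rw [h_csmul, hPe', smul_zero]
  -- the key identity
  have e1 : ∀ z w : X, ip w (z - smul e (ip e z)) = ip w z - ip w e * ip e z := fun z w => by
    rw [ip_sub_right, h_smul]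
  have hkey : ip (x - smul e (ip e x)) (y - smul e (ip e y)) = ip x y - ip x e * ip e y := by
    have e2 : ip (x - smul e (ip e x)) (y - smul e (ip e y))
        = ip (x - smul e (ip e x)) y := by
      rw [e1, hPe' x, zero_mul, sub_zero]
    rw [e2, ← h_star, e1, star_sub, h_star, star_mul, h_star, h_star]
  -- the norm bound for the projection
  have hbound : ∀ (z : X) (c : ℂ), ‖z - smul e (ip e z)‖ ≤ ‖z - c • e‖ := by
    intro z c
    set Pz := z - smul e (ip e z) with hPzdef
    set q := ip Pz Pz with hq
    have hq1 : ip Pz z = q := by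
      have hz2 : z = Pz + smul e (ip e z) := by rw [hPzdef]; abel
      calc ip Pz z = ip Pz (Pz + smul e (ip e z)) := by rw [← hz2]
        _ = q + ip Pz e * ip e z := by rw [h_add, h_smul, hq]
        _ = q := by rw [hPzdef, hPe', zero_mul, add_zero]
    set u := z - c • e with hu
    have hq2 : ip Pz u = q := by
      rw [hu, ip_sub_right, hq1, hPzdef, hPc, sub_zero]
    set w := u - Pz with hwdef
    have huw : u = Pz + w := by rw [hwdef]; abel
    have hw : ip u u = q + ip w w := by
      have h4 : ip Pz w = 0 := by
        rw [hwdef, ip_sub_right, hq2, ← hq, sub_self]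
      have h5 : ip w Pz = 0 := by
        rw [← h_star, h4, star_zero]
      calc ip u u = ip (Pz + w) (Pz + w) := by rw [← huw]
        _ = ip Pz (Pz + w) + ip w (Pz + w) := ip_add_left _ _ _
        _ = (q + ip Pz w) + (ip w Pz + ip w w) := by rw [h_add, h_add, hq]
        _ = q + ip w w := by rw [h4, h5, add_zero, zero_add]
    have hle : q ≤ ip u u := by
      rw [hw]; exact le_add_of_nonneg_right (h_pos _)
    rw [h_norm, h_norm]
    exact Real.sqrt_le_sqrt (CStarAlgebra.norm_le_norm_of_nonneg_of_le (h_pos _) hle)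
  have hCS : ‖ip (x - smul e (ip e x)) (y - smul e (ip e y))‖
      ≤ ‖x - smul e (ip e x)‖ * ‖y - smul e (ip e y)‖ :=
    CStarModule.norm_inner_le (A := Aᵐᵒᵖ) X
  rw [← hkey]
  have hx' : ‖x - smul e (ip e x)‖ ≤ (1 / 2) * ‖α - β‖ :=
    (hbound x ((α + β)/2)).trans hx
  have hy' : ‖y - smul e (ip e y)‖ ≤ (1 / 2) * ‖lam - μ‖ :=
    (hbound y ((lam + μ)/2)).trans hy
  calc ‖ip (x - smul e (ip e x)) (y - smul e (ip e y))‖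
      ≤ ‖x - smul e (ip e x)‖ * ‖y - smul e (ip e y)‖ := hCS
    _ ≤ ((1/2) * ‖α - β‖) * ((1/2) * ‖lam - μ‖) :=
        mul_le_mul hx' hy' (norm_nonneg _) (by positivity)
    _ = (1 / 4) * ‖α - β‖ * ‖lam - μ‖ := by ring
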